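/- Sokhotski–Plemelj decomposition of the regularized kernel: for every Schwartz (or compactly supported smooth) test function ψ : ℝ → ℂ, lim_{ε→0⁺} ∫_ℝ ψ(η)/(η − iε) dη = P.V.∫_ℝ ψ(η)/η dη + iπ·ψ(0). -/

import Mathlib

open MeasureTheory Real Set Complex Filter

noncomputable def spChi (ψ : SchwartzMap ℝ ℂ) : ℝ → ℂ :=
  Set.indicator (Set.Icc (-1 : ℝ) 1) fun _ => ψ 0

noncomputable def spG (ψ : SchwartzMap ℝ ℂ) : ℝ → ℂ := fun η => ψ η - spChi ψ η

noncomputable def spH (ψ : SchwartzMap ℝ ℂ) : ℝ → ℂ := fun η => spG ψ η / (η : ℂ)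

lemma spG_meas (ψ : SchwartzMap ℝ ℂ) : Measurable (spG ψ) :=
  (ψ.continuous.measurable).sub (measurable_const.indicator measurableSet_Icc)

lemma spH_meas (ψ : SchwartzMap ℝ ℂ) : Measurable (spH ψ) :=
  (spG_meas ψ).div (Complex.measurable_ofReal)

lemma sp_lip (ψ : SchwartzMap ℝ ℂ) : ∃ C : ℝ, 0 ≤ C ∧ ∀ x : ℝ, ‖ψ x - ψ 0‖ ≤ C * |x| := by
  obtain ⟨C, hC⟩ := ψ.decay' 0 1
  refine ⟨max C 0, le_max_right _ _, fun x => ?_⟩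
  have hd : ∀ y : ℝ, ‖fderiv ℝ ψ y‖ ≤ max C 0 := by
    intro y
    have h1 : ‖iteratedFDeriv ℝ 1 ψ y‖ ≤ C := by
      have := hC y; simp only [pow_zero, one_mul] at this; exact this
    have h2 : ‖iteratedFDeriv ℝ 0 (fderiv ℝ ψ) y‖ = ‖iteratedFDeriv ℝ 1 ψ y‖ :=
      norm_iteratedFDeriv_fderiv
    rw [norm_iteratedFDeriv_zero] at h2
    exact h2 ▸ h1.trans (le_max_left _ _)
  have := Convex.norm_image_sub_le_of_norm_fderiv_le
    (fun y _ => ψ.differentiable.differentiableAt)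
    (fun y _ => hd y) (convex_univ) (Set.mem_univ (0:ℝ)) (Set.mem_univ x)
  simpa [Real.norm_eq_abs] using this

lemma spH_norm_le (ψ : SchwartzMap ℝ ℂ) {C : ℝ} (hC0 : 0 ≤ C)
    (hC : ∀ x : ℝ, ‖ψ x - ψ 0‖ ≤ C * |x|) (η : ℝ) :
    ‖spH ψ η‖ ≤ (Set.Icc (-1 : ℝ) 1).indicator (fun _ => C) η + ‖ψ η‖ := by
  by_cases hη : η ∈ Set.Icc (-1 : ℝ) 1
  · have : spG ψ η = ψ η - ψ 0 := by simp [spG, spChi, Set.indicator_of_mem hη]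
    rw [Set.indicator_of_mem hη]
    rcases eq_or_ne η 0 with rfl | h0
    · simp [spH, this]
      positivity
    · have : ‖spH ψ η‖ = ‖ψ η - ψ 0‖ / |η| := by
        simp [spH, this, norm_div, Complex.norm_real, Real.norm_eq_abs]
      rw [this]
      have habs : 0 < |η| := abs_pos.mpr h0
      calc ‖ψ η - ψ 0‖ / |η| ≤ C * |η| / |η| := by gcongr; exact hC η
        _ = C := by field_simp
        _ ≤ C + ‖ψ η‖ := le_add_of_nonneg_right (norm_nonneg _)
  · have h1 : (1:ℝ) < |η| := by
      have h2 := hη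
      rw [Set.mem_Icc, not_and_or, not_le, not_le] at h2
      rcases h2 with h | h
      · rw [abs_of_neg (by linarith)]; linarith
      · rw [abs_of_pos (by linarith)]; linarith
    have : spG ψ η = ψ η := by simp [spG, spChi, Set.indicator_of_notMem hη]
    have hn : ‖spH ψ η‖ = ‖ψ η‖ / |η| := by
      simp [spH, this, norm_div, Complex.norm_real, Real.norm_eq_abs]
    rw [Set.indicator_of_notMem hη, hn, zero_add]
    calc ‖ψ η‖ / |η| ≤ ‖ψ η‖ / 1 := by
          apply div_le_div_of_nonneg_left (norm_nonneg _) one_pos h1.le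
      _ = ‖ψ η‖ := div_one _

lemma spH_integrable (ψ : SchwartzMap ℝ ℂ) : Integrable (spH ψ) := by
  obtain ⟨C, hC0, hC⟩ := sp_lip ψ
  refine Integrable.mono' ?_ (spH_meas ψ).aestronglyMeasurable
    (Filter.Eventually.of_forall (spH_norm_le ψ hC0 hC))
  exact (((integrableOn_const_iff (C := C) (by simp)).mpr (Or.inr (measure_Icc_lt_top (a := (-1 : ℝ)) (b := 1)))).integrable_indicator
    measurableSet_Icc).add ψ.integrable.norm

lemma sp_symm_zero {T : Set ℝ} (hsymm : ∀ x : ℝ, -x ∈ T ↔ x ∈ T) :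
    ∫ η : ℝ, T.indicator (fun η : ℝ => ((η : ℂ))⁻¹) η = 0 := by
  set f : ℝ → ℂ := T.indicator (fun η : ℝ => ((η : ℂ))⁻¹) with hf
  have hneg : ∀ x : ℝ, f (-x) = -f x := by
    intro x
    by_cases hx : x ∈ T
    · rw [hf, Set.indicator_of_mem ((hsymm x).mpr hx), Set.indicator_of_mem hx]
      push_cast
      rw [inv_neg]
    · rw [hf, Set.indicator_of_notMem (fun h => hx ((hsymm x).mp h)),
        Set.indicator_of_notMem hx, neg_zero]
  have h1 : ∫ η : ℝ, f (-η) = ∫ η : ℝ, f η := integral_neg_eq_self f volume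
  have h2 : ∫ η : ℝ, f (-η) = -∫ η : ℝ, f η := by
    simp_rw [hneg]; exact integral_neg f
  have h3 := h1.symm.trans h2
  have : (2 : ℂ) * ∫ η : ℝ, f η = 0 := by
    rw [two_mul]; nth_rewrite 1 [h3]; ring
  simpa [two_ne_zero] using this

lemma sp_part1_eq (ψ : SchwartzMap ℝ ℂ) {δ : ℝ} (hδ : 0 < δ) :
    (∫ η in {η : ℝ | δ ≤ |η|}, ψ η / (η : ℂ)) =
      ∫ η : ℝ, ({η : ℝ | δ ≤ |η|}).indicator (spH ψ) η := by
  set S : Set ℝ := {η : ℝ | δ ≤ |η|} with hSdef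
  have hS : MeasurableSet S := (isClosed_le continuous_const _root_.continuous_abs).measurableSet
  have hmeas : AEStronglyMeasurable (fun η : ℝ => ψ η / (η : ℂ)) (volume.restrict S) :=
    ((ψ.continuous.measurable.div Complex.measurable_ofReal)).aestronglyMeasurable.restrict
  have hInt1 : IntegrableOn (fun η : ℝ => ψ η / (η : ℂ)) S := by
    refine Integrable.mono' ((ψ.integrable.norm.div_const δ).restrict (s := S)) hmeas ?_
    refine (ae_restrict_iff' hS).2 (Filter.Eventually.of_forall fun η hη => ?_)
    have hη' : δ ≤ |η| := hη
    rw [norm_div, Complex.norm_real, Real.norm_eq_abs]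
    exact div_le_div_of_nonneg_left (norm_nonneg _) hδ hη'
  have hInt2 : IntegrableOn (spH ψ) S := (spH_integrable ψ).integrableOn
  have hptw : ∀ η : ℝ, ψ η / (η : ℂ) = spH ψ η + spChi ψ η / (η : ℂ) := by
    intro η
    rw [spH, spG, ← add_div, sub_add_cancel]
  have hInt3 : IntegrableOn (fun η : ℝ => spChi ψ η / (η : ℂ)) S := by
    refine (hInt1.sub hInt2).congr (Filter.Eventually.of_forall fun η => ?_)
    rw [Pi.sub_apply, hptw η]; ring
  have hsplit : (∫ η in S, ψ η / (η : ℂ))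
      = (∫ η in S, spH ψ η) + ∫ η in S, spChi ψ η / (η : ℂ) := by
    simp_rw [hptw]
    exact integral_add hInt2 hInt3
  have hzero : (∫ η in S, spChi ψ η / (η : ℂ)) = 0 := by
    rw [← integral_indicator hS]
    have heq : S.indicator (fun η : ℝ => spChi ψ η / (η : ℂ))
        = fun η : ℝ => ψ 0 * (S ∩ Set.Icc (-1 : ℝ) 1).indicator
            (fun η : ℝ => ((η : ℂ))⁻¹) η := by
      funext η
      by_cases hη : η ∈ S
      · by_cases hI : η ∈ Set.Icc (-1 : ℝ) 1
        · rw [Set.indicator_of_mem hη, Set.indicator_of_mem (Set.mem_inter hη hI), spChi,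
            Set.indicator_of_mem hI, div_eq_mul_inv]
        · rw [Set.indicator_of_mem hη, Set.indicator_of_notMem (fun h => hI h.2), spChi,
            Set.indicator_of_notMem hI, zero_div, mul_zero]
      · rw [Set.indicator_of_notMem hη, Set.indicator_of_notMem (fun h => hη h.1), mul_zero]
    rw [heq, integral_const_mul, sp_symm_zero, mul_zero]
    intro x
    simp only [Set.mem_inter_iff, hSdef, Set.mem_setOf_eq, abs_neg, Set.mem_Icc]
    constructor
    · rintro ⟨h1, h2, h3⟩; exact ⟨h1, by linarith, by linarith⟩
    · rintro ⟨h1, h2, h3⟩; exact ⟨h1, by linarith, by linarith⟩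
  rw [hsplit, hzero, add_zero, ← integral_indicator hS]

lemma sp_ae_ne_zero : ∀ᵐ η : ℝ, η ≠ (0 : ℝ) := by
  rw [ae_iff]
  simp only [not_not, Set.setOf_eq_eq_singleton]
  exact measure_singleton 0

lemma sp_part1_tendsto (ψ : SchwartzMap ℝ ℂ) :
    Tendsto (fun δ : ℝ => ∫ η : ℝ, ({η : ℝ | δ ≤ |η|}).indicator (spH ψ) η)
      (nhdsWithin 0 (Set.Ioi 0)) (nhds (∫ η : ℝ, spH ψ η)) := by
  have hS : ∀ δ : ℝ, MeasurableSet {η : ℝ | δ ≤ |η|} := fun δ =>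
    (isClosed_le continuous_const _root_.continuous_abs).measurableSet
  refine tendsto_integral_filter_of_dominated_convergence (fun η => ‖spH ψ η‖)
    (Filter.Eventually.of_forall fun δ =>
      ((spH_meas ψ).indicator (hS δ)).aestronglyMeasurable)
    (Filter.Eventually.of_forall fun δ =>
      (Filter.Eventually.of_forall fun η => norm_indicator_le_norm_self _ _))
    (spH_integrable ψ).norm ?_
  filter_upwards [sp_ae_ne_zero] with η hη
  have habs : 0 < |η| := abs_pos.mpr hη
  have hev : ∀ᶠ δ in nhdsWithin (0:ℝ) (Set.Ioi 0), δ ∈ Set.Ioo (0:ℝ) |η| :=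
    Ioo_mem_nhdsGT_of_mem ⟨le_refl 0, habs⟩
  refine Tendsto.congr' ?_ tendsto_const_nhds
  filter_upwards [hev] with δ hδ
  exact (Set.indicator_of_mem (show η ∈ {η : ℝ | δ ≤ |η|} from le_of_lt hδ.2) (spH ψ)).symm

lemma sp_denom_ne (ε : ℝ) (hε : 0 < ε) (η : ℝ) : ((η : ℂ) - Complex.I * (ε : ℂ)) ≠ 0 := by
  intro h
  have := congrArg Complex.im h
  simp [Complex.sub_im, Complex.mul_im] at this
  exact hε.ne' this

lemma sp_slit (ε : ℝ) (hε : 0 < ε) (η : ℝ) :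
    ((η : ℂ) - Complex.I * (ε : ℂ)) ∈ Complex.slitPlane := by
  rw [Complex.mem_slitPlane_iff]
  right
  simp [Complex.sub_im, Complex.mul_im]
  exact fun h => (hε.ne' h).elim

lemma sp_log_integral {ε : ℝ} (hε : 0 < ε) :
    (∫ η in (-1 : ℝ)..1, ((η : ℂ) - Complex.I * (ε : ℂ))⁻¹) =
      Complex.log (1 - Complex.I * ε) - Complex.log (-1 - Complex.I * ε) := by
  have hcont : Continuous (fun η : ℝ => ((η : ℂ) - Complex.I * (ε : ℂ))⁻¹) :=
    ((Complex.continuous_ofReal.sub continuous_const).inv₀ (sp_denom_ne ε hε))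
  have hderiv : ∀ x ∈ Set.uIcc (-1 : ℝ) 1,
      HasDerivAt (fun η : ℝ => Complex.log ((η : ℂ) - Complex.I * (ε : ℂ)))
        (((x : ℂ) - Complex.I * (ε : ℂ))⁻¹) x := by
    intro x _
    have h1 : HasDerivAt (fun w : ℂ => w - Complex.I * (ε : ℂ)) 1 (x : ℂ) :=
      (hasDerivAt_id _).sub_const _
    have h2 := Complex.hasDerivAt_log (sp_slit ε hε x)
    have h3 := HasDerivAt.comp (x : ℂ) h2 h1
    simpa using h3.comp_ofReal
  have := intervalIntegral.integral_eq_sub_of_hasDerivAt hderiv (hcont.intervalIntegrable _ _)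
  rw [this]
  norm_num

lemma sp_log_limit :
    Tendsto (fun ε : ℝ => Complex.log (1 - Complex.I * ε) - Complex.log (-1 - Complex.I * ε))
      (nhdsWithin 0 (Set.Ioi 0)) (nhds (Complex.I * (Real.pi : ℂ))) := by
  have hmapcont : Continuous (fun ε : ℝ => (1 : ℂ) - Complex.I * ε) :=
    continuous_const.sub (continuous_const.mul Complex.continuous_ofReal)
  have hmap1 : Tendsto (fun ε : ℝ => (1 : ℂ) - Complex.I * ε)
      (nhdsWithin 0 (Set.Ioi 0)) (nhds 1) := by
    have := (hmapcont.tendsto 0).mono_left (nhdsWithin_le_nhds (s := Set.Ioi (0:ℝ)))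
    simpa using this
  have ha : Tendsto (fun ε : ℝ => Complex.log (1 - Complex.I * ε))
      (nhdsWithin 0 (Set.Ioi 0)) (nhds 0) := by
    have hc : ContinuousAt Complex.log 1 :=
      continuousAt_clog (by simp [Complex.mem_slitPlane_iff])
    have := hc.tendsto.comp hmap1
    simpa [Complex.log_one, Function.comp_def] using this
  have hmapcont2 : Continuous (fun ε : ℝ => (-1 : ℂ) - Complex.I * ε) :=
    continuous_const.sub (continuous_const.mul Complex.continuous_ofReal)
  have hmap2 : Tendsto (fun ε : ℝ => (-1 : ℂ) - Complex.I * ε)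
      (nhdsWithin 0 (Set.Ioi 0)) (nhdsWithin (-1) {z : ℂ | z.im < 0}) := by
    rw [tendsto_nhdsWithin_iff]
    constructor
    · have := (hmapcont2.tendsto 0).mono_left (nhdsWithin_le_nhds (s := Set.Ioi (0:ℝ)))
      simpa using this
    · filter_upwards [eventually_mem_nhdsWithin] with ε hε
      have hε' : (0:ℝ) < ε := hε
      show ((-1 : ℂ) - Complex.I * ε).im < 0
      simp [Complex.sub_im, Complex.mul_im]
      exact hε'
  have hb : Tendsto (fun ε : ℝ => Complex.log (-1 - Complex.I * ε))
      (nhdsWithin 0 (Set.Ioi 0)) (nhds (-(Real.pi * Complex.I))) := by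
    have h := Complex.tendsto_log_nhdsWithin_im_neg_of_re_neg_of_im_zero
      (z := (-1 : ℂ)) (by simp) (by simp)
    have h2 := h.comp hmap2
    simpa [Function.comp_def] using h2
  have := ha.sub hb
  rw [show (0 : ℂ) - -(Real.pi * Complex.I) = Complex.I * (Real.pi : ℂ) by ring] at this
  exact this

lemma sp_part2_eq (ψ : SchwartzMap ℝ ℂ) {ε : ℝ} (hε : 0 < ε) :
    (∫ η : ℝ, ψ η / ((η : ℂ) - Complex.I * (ε : ℂ))) =
      (∫ η : ℝ, spG ψ η / ((η : ℂ) - Complex.I * (ε : ℂ))) +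
        ψ 0 * ∫ η in (-1 : ℝ)..1, ((η : ℂ) - Complex.I * (ε : ℂ))⁻¹ := by
  set d : ℝ → ℂ := fun η => (η : ℂ) - Complex.I * (ε : ℂ) with hd
  have hdmeas : Measurable d := (Complex.measurable_ofReal).sub measurable_const
  have habs : ∀ η : ℝ, ε ≤ ‖d η‖ := by
    intro η
    have h1 : |(d η).im| ≤ ‖d η‖ := Complex.abs_im_le_norm _
    have h2 : (d η).im = -ε := by simp [hd, Complex.sub_im, Complex.mul_im]
    rw [h2, abs_neg, abs_of_pos hε] at h1
    simpa using h1
  have hIntψ : Integrable (fun η : ℝ => ψ η / d η) := by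
    refine Integrable.mono' (ψ.integrable.norm.div_const ε)
      ((ψ.continuous.measurable.div hdmeas).aestronglyMeasurable)
      (Filter.Eventually.of_forall fun η => ?_)
    rw [norm_div]
    exact div_le_div_of_nonneg_left (norm_nonneg _) hε (habs η)
  have hIntχ : Integrable (fun η : ℝ => spChi ψ η / d η) := by
    have heq : (fun η : ℝ => spChi ψ η / d η)
        = (Set.Icc (-1 : ℝ) 1).indicator (fun η : ℝ => ψ 0 / d η) := by
      funext η
      by_cases hη : η ∈ Set.Icc (-1 : ℝ) 1
      · rw [Set.indicator_of_mem hη, spChi, Set.indicator_of_mem hη]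
      · rw [Set.indicator_of_notMem hη, spChi, Set.indicator_of_notMem hη, zero_div]
    rw [heq]
    refine IntegrableOn.integrable_indicator ?_ measurableSet_Icc
    exact (continuous_const.div ((Complex.continuous_ofReal).sub continuous_const)
      (sp_denom_ne ε hε)).integrableOn_Icc
  have hptw : ∀ η : ℝ, ψ η / d η = spG ψ η / d η + spChi ψ η / d η := by
    intro η
    rw [spG, ← add_div, sub_add_cancel]
  have hIntG : Integrable (fun η : ℝ => spG ψ η / d η) := by
    refine (hIntψ.sub hIntχ).congr (Filter.Eventually.of_forall fun η => ?_)
    rw [Pi.sub_apply, hptw η]; ring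
  have hsplit : (∫ η : ℝ, ψ η / d η)
      = (∫ η : ℝ, spG ψ η / d η) + ∫ η : ℝ, spChi ψ η / d η := by
    simp_rw [hptw]
    exact integral_add hIntG hIntχ
  have hχval : (∫ η : ℝ, spChi ψ η / d η) = ψ 0 * ∫ η in (-1 : ℝ)..1, (d η)⁻¹ := by
    have heq : (fun η : ℝ => spChi ψ η / d η)
        = (Set.Icc (-1 : ℝ) 1).indicator (fun η : ℝ => ψ 0 * (d η)⁻¹) := by
      funext η
      by_cases hη : η ∈ Set.Icc (-1 : ℝ) 1
      · rw [Set.indicator_of_mem hη, spChi, Set.indicator_of_mem hη, div_eq_mul_inv]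
      · rw [Set.indicator_of_notMem hη, spChi, Set.indicator_of_notMem hη, zero_div]
    rw [heq, integral_indicator measurableSet_Icc,
      MeasureTheory.integral_Icc_eq_integral_Ioc,
      ← intervalIntegral.integral_of_le (by norm_num : (-1 : ℝ) ≤ 1),
      intervalIntegral.integral_const_mul]
  rw [hsplit, hχval]

lemma sp_part2_tendstoG (ψ : SchwartzMap ℝ ℂ) :
    Tendsto (fun ε : ℝ => ∫ η : ℝ, spG ψ η / ((η : ℂ) - Complex.I * (ε : ℂ)))
      (nhdsWithin 0 (Set.Ioi 0)) (nhds (∫ η : ℝ, spH ψ η)) := by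
  refine tendsto_integral_filter_of_dominated_convergence (fun η => ‖spH ψ η‖)
    (Filter.Eventually.of_forall fun ε =>
      ((spG_meas ψ).div ((Complex.measurable_ofReal).sub measurable_const)).aestronglyMeasurable)
    ?_ (spH_integrable ψ).norm ?_
  · filter_upwards [eventually_mem_nhdsWithin] with ε hε
    filter_upwards [sp_ae_ne_zero] with η hη
    have habs : |η| ≤ ‖(η : ℂ) - Complex.I * (ε : ℂ)‖ := by
      have h1 : |((η : ℂ) - Complex.I * (ε : ℂ)).re| ≤
          ‖(η : ℂ) - Complex.I * (ε : ℂ)‖ := Complex.abs_re_le_norm _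
      have h2 : ((η : ℂ) - Complex.I * (ε : ℂ)).re = η := by
        simp [Complex.sub_re, Complex.mul_re]
      rw [h2] at h1
      simpa using h1
    have h0 : (0 : ℝ) < |η| := abs_pos.mpr hη
    rw [norm_div]
    have hH : ‖spH ψ η‖ = ‖spG ψ η‖ / |η| := by
      rw [spH, norm_div, Complex.norm_real, Real.norm_eq_abs]
    rw [hH]
    exact div_le_div_of_nonneg_left (norm_nonneg _) h0 habs
  · filter_upwards [sp_ae_ne_zero] with η hη
    have hne : ((η : ℂ)) ≠ 0 := Complex.ofReal_ne_zero.mpr hη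
    have hden : Tendsto (fun ε : ℝ => (η : ℂ) - Complex.I * (ε : ℂ))
        (nhdsWithin 0 (Set.Ioi 0)) (nhds (η : ℂ)) := by
      have hc : Continuous (fun ε : ℝ => (η : ℂ) - Complex.I * (ε : ℂ)) :=
        continuous_const.sub (continuous_const.mul Complex.continuous_ofReal)
      have := (hc.tendsto 0).mono_left (nhdsWithin_le_nhds (s := Set.Ioi (0:ℝ)))
      simpa using this
    exact Tendsto.div tendsto_const_nhds hden hne

/-- Sokhotski–Plemelj: the regularized Cauchy kernel splits into the principal value
plus iπ·δ. -/
theorem sokhotski_plemelj (ψ : SchwartzMap ℝ ℂ) :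
    ∃ pv : ℂ,
      Tendsto (fun δ : ℝ => ∫ η in {η : ℝ | δ ≤ |η|}, ψ η / (η : ℂ))
        (nhdsWithin 0 (Set.Ioi 0)) (nhds pv) ∧
      Tendsto (fun ε : ℝ => ∫ η : ℝ, ψ η / ((η : ℂ) - Complex.I * (ε : ℂ)))
        (nhdsWithin 0 (Set.Ioi 0))
        (nhds (pv + Complex.I * (Real.pi : ℂ) * ψ 0)) := by
  refine ⟨∫ η : ℝ, spH ψ η, ?_, ?_⟩
  · refine (sp_part1_tendsto ψ).congr' ?_
    filter_upwards [eventually_mem_nhdsWithin] with δ hδ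
    exact (sp_part1_eq ψ hδ).symm
  · have h2 : Tendsto (fun ε : ℝ => ψ 0 * ∫ η in (-1 : ℝ)..1,
        ((η : ℂ) - Complex.I * (ε : ℂ))⁻¹) (nhdsWithin 0 (Set.Ioi 0))
        (nhds (ψ 0 * (Complex.I * (Real.pi : ℂ)))) := by
      refine (tendsto_const_nhds.mul sp_log_limit).congr' ?_
      filter_upwards [eventually_mem_nhdsWithin] with ε hε
      rw [sp_log_integral hε]
    have h3 := (sp_part2_tendstoG ψ).add h2
    have h4 : Tendsto (fun ε : ℝ => ∫ η : ℝ, ψ η / ((η : ℂ) - Complex.I * (ε : ℂ)))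
        (nhdsWithin 0 (Set.Ioi 0))
        (nhds ((∫ η : ℝ, spH ψ η) + ψ 0 * (Complex.I * (Real.pi : ℂ)))) := by
      refine h3.congr' ?_
      filter_upwards [eventually_mem_nhdsWithin] with ε hε
      exact (sp_part2_eq ψ hε).symm
    convert h4 using 2
    ring
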